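/- Let Θ be a nonempty set, p ≥ 1, and for each θ ∈ Θ, j ∈ [p] let μ_{θj}, v_{θj} ∈ ℝ and r_{θj} > 0. Suppose Θ_I := {θ ∈ Θ : μ_{θj} ≤ 0 for all j ∈ [p]} is nonempty, sup_{θ,j} |v_{θj}| ≤ w̄ < ∞, and |r_{θj} − 1| ≤ t and |r_{θj}^{-1} − 1| ≤ t for all θ, j, where 0 ≤ t < 1. Set b_{θj} := (v_{θj} + μ_{θj})·r_{θj}. Then for every ε ≥ 0, every θ̂ ∈ Θ with max_{j∈[p]} b_{θ̂j} ≤ inf_{θ∈Θ} max_{j∈[p]} b_{θj} + ε satisfies max_{j∈[p]} μ_{θ̂j} ≤ (2(1+t)·w̄ + ε)/(1 − t). -/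

import Mathlib

/-- Every ε-minimizer of the MinMax statistic has nearly nonpositive standardized
population moments.  Here `μ θ j` is the standardized population moment, `r θ j` the
ratio of the population to the sample standard deviation, `v θ j` the standardized
empirical process, so `(v θ j + μ θ j) * r θ j = √n m̄_{θ,j}/σ̂_{θ,j}`;  the ε-minimizer
property `max_j b_{θ̂ j} ≤ inf_θ max_j b_{θ j} + ε` is expressed by its equivalent
pointwise form. -/
theorem eMinimizer_nearly_feasible {ι : Type*} [Nonempty ι] (p : ℕ) [NeZero p]
    (μ v r : ι → Fin p → ℝ) (hr : ∀ θ j, 0 < r θ j)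
    (hI : ∃ θ, ∀ j, μ θ j ≤ 0)
    (w t : ℝ) (ht0 : 0 ≤ t) (ht1 : t < 1)
    (hv : ∀ θ j, |v θ j| ≤ w)
    (hr1 : ∀ θ j, |r θ j - 1| ≤ t)
    (hr2 : ∀ θ j, |(r θ j)⁻¹ - 1| ≤ t)
    (ε : ℝ) (hε : 0 ≤ ε) (θhat : ι)
    (hmin : ∀ θ, (Finset.univ.sup' Finset.univ_nonempty
          fun j => (v θhat j + μ θhat j) * r θhat j) ≤
        (Finset.univ.sup' Finset.univ_nonempty
          fun j => (v θ j + μ θ j) * r θ j) + ε) :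
    (Finset.univ.sup' Finset.univ_nonempty fun j => μ θhat j) ≤
      (2 * (1 + t) * w + ε) / (1 - t) := by
  obtain ⟨θ₀, hθ₀⟩ := hI
  have hw : 0 ≤ w := le_trans (abs_nonneg _) (hv θ₀ (Classical.arbitrary (Fin p)))
  -- bound for the infimum candidate θ₀
  have h0 : (Finset.univ.sup' Finset.univ_nonempty
      fun j => (v θ₀ j + μ θ₀ j) * r θ₀ j) ≤ (1 + t) * w := by
    apply Finset.sup'_le
    intro j _
    have hrj := hr θ₀ j
    have hrle : r θ₀ j ≤ 1 + t := by have := abs_le.1 (hr1 θ₀ j); linarith [this.2]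
    have hvle : v θ₀ j ≤ w := (abs_le.1 (hv θ₀ j)).2
    have hμ := hθ₀ j
    nlinarith [mul_le_mul_of_nonneg_right (add_le_add hvle hμ) hrj.le,
      mul_le_mul_of_nonneg_left hrle hw]
  have hB : (Finset.univ.sup' Finset.univ_nonempty
      fun j => (v θhat j + μ θhat j) * r θhat j) ≤ (1 + t) * w + ε :=
    (hmin θ₀).trans (add_le_add_left h0 ε)
  apply Finset.sup'_le
  intro j _
  have hbj : (v θhat j + μ θhat j) * r θhat j ≤ (1 + t) * w + ε :=
    le_trans (Finset.le_sup' (fun j => (v θhat j + μ θhat j) * r θhat j) (Finset.mem_univ j)) hB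
  have hrj := hr θhat j
  have hrge : 1 - t ≤ r θhat j := by have := abs_le.1 (hr1 θhat j); linarith [this.1]
  have hrle : r θhat j ≤ 1 + t := by have := abs_le.1 (hr1 θhat j); linarith [this.2]
  have hvabs := abs_le.1 (hv θhat j)
  rw [le_div_iff₀ (by linarith : (0:ℝ) < 1 - t)]
  rcases le_or_gt (μ θhat j) 0 with hμ | hμ
  · nlinarith [mul_nonpos_of_nonpos_of_nonneg hμ (by linarith : (0:ℝ) ≤ 1 - t),
      mul_nonneg ht0 hw]
  · nlinarith [mul_le_mul_of_nonneg_left hrge hμ.le,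
      mul_le_mul_of_nonneg_left hrle hw,
      mul_le_mul_of_nonneg_right (neg_le_of_abs_le (hv θhat j)) hrj.le]
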